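/- Let H : ℝ^d → ℝ be twice continuously differentiable and let ∇̄H : ℝ^d × ℝ^d → ℝ^d be a continuously differentiable (jointly in both arguments) map satisfying the discrete gradient condition. If ∇̄H is symmetric, i.e. ∇̄H(x,y) = ∇̄H(y,x) for all x, y ∈ ℝ^d, then D₂∇̄H(x,x) = ½ ∇²H(x) for every x ∈ ℝ^d. -/

import Mathlib

open scoped RealInnerProductSpace

theorem dg_aux {E : Type*} [NormedAddCommGroup E] [InnerProductSpace ℝ E] [CompleteSpace E]
    (H : E → ℝ) (hH : ContDiff ℝ 2 H) (dg : E → E → E)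
    (hdgC1 : ContDiff ℝ 1 (fun p : E × E => dg p.1 p.2))
    (hdg : ∀ x y, ⟪dg x y, y - x⟫ = H y - H x)
    (hsymm : ∀ x y, dg x y = dg y x) (x : E) :
    fderiv ℝ (dg x) x = (2 : ℝ)⁻¹ • fderiv ℝ (gradient H) x := by
  set F : E × E → E := fun p => dg p.1 p.2 with hF
  have hFdiff : Differentiable ℝ F := hdgC1.differentiable one_ne_zero
  have hH1 : ContDiff ℝ 1 (fderiv ℝ H) := hH.fderiv_right (by norm_num)
  set S'' := fderiv ℝ (fderiv ℝ H) x with hS''def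
  have hS'' : HasFDerivAt (fderiv ℝ H) S'' x := (hH1.differentiable one_ne_zero x).hasFDerivAt
  have S''symm : ∀ v w, S'' v w = S'' w v :=
    second_derivative_symmetric (fun y => (hH.differentiable two_ne_zero y).hasFDerivAt) hS''
  set L0 := fderiv ℝ F (x, x) with hL0def
  have hL0 : HasFDerivAt F L0 (x, x) := (hFdiff (x, x)).hasFDerivAt
  set A := fderiv ℝ (dg x) x with hAdef
  -- A v = L0 (0, v)
  have hA : ∀ v : E, A v = L0 (0, v) := by
    intro v
    have hpath : HasFDerivAt (fun y : E => ((x : E), y))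
        ((0 : E →L[ℝ] E).prod (ContinuousLinearMap.id ℝ E)) x :=
      (hasFDerivAt_const x x).prodMk (hasFDerivAt_id x)
    have hcomp : HasFDerivAt (dg x)
        (L0.comp ((0 : E →L[ℝ] E).prod (ContinuousLinearMap.id ℝ E))) x :=
      hL0.comp x hpath
    rw [hAdef, hcomp.fderiv]
    simp
  -- symmetry: L0 (u, 0) = L0 (0, u)
  have hswap : ∀ u : E, L0 (u, 0) = L0 (0, u) := by
    intro u
    have e : HasFDerivAt (fun p : E × E => (p.2, p.1))
        ((ContinuousLinearMap.snd ℝ E E).prod (ContinuousLinearMap.fst ℝ E E)) (x, x) :=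
      (hasFDerivAt_snd).prodMk (hasFDerivAt_fst)
    have hc : HasFDerivAt (fun p : E × E => F (p.2, p.1))
        (L0.comp ((ContinuousLinearMap.snd ℝ E E).prod (ContinuousLinearMap.fst ℝ E E)))
        (x, x) := HasFDerivAt.comp (x, x) (f := fun p : E × E => (p.2, p.1)) hL0 e
    have hfe : (fun p : E × E => F (p.2, p.1)) = F := by
      funext p; exact hsymm p.2 p.1
    rw [hfe] at hc
    have := hL0.unique hc
    calc L0 (u, 0) = (L0.comp ((ContinuousLinearMap.snd ℝ E E).prod
          (ContinuousLinearMap.fst ℝ E E))) (0, u) := by simp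
      _ = L0 (0, u) := by rw [← this]
  -- key identity
  have key : ∀ u v : E, 2 * ⟪A u + A v, v - u⟫ = S'' v v - S'' u u := by
    intro u v
    set γ : ℝ → E × E := fun t => (x + t • u, x + t • v) with hγdef
    have hγ : ∀ t : ℝ, HasDerivAt γ (u, v) t := by
      intro t
      have h1 : HasDerivAt (fun t : ℝ => x + t • u) u t := by
        simpa using ((hasDerivAt_id t).smul_const u).const_add x
      have h2 : HasDerivAt (fun t : ℝ => x + t • v) v t := by
        simpa using ((hasDerivAt_id t).smul_const v).const_add x
      exact h1.prodMk h2
    have hγc : ContDiff ℝ 1 γ := by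
      apply ContDiff.prodMk
      · exact contDiff_const.add (contDiff_id.smul contDiff_const)
      · exact contDiff_const.add (contDiff_id.smul contDiff_const)
    set m : ℝ → ℝ := fun t => ⟪v - u, F (γ t)⟫ with hmdef
    have hmC1 : ContDiff ℝ 1 m := (innerSL ℝ (v - u)).contDiff.comp (hdgC1.comp hγc)
    have hm : ∀ t : ℝ, HasDerivAt m ⟪v - u, fderiv ℝ F (γ t) (u, v)⟫ t := by
      intro t
      exact ((innerSL ℝ (v - u)).hasFDerivAt.comp (γ t)
        (hFdiff (γ t)).hasFDerivAt).comp_hasDerivAt t (hγ t)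
    have hm' : ∀ t : ℝ, deriv m t = ⟪v - u, fderiv ℝ F (γ t) (u, v)⟫ := fun t => (hm t).deriv
    have hm'cont : Continuous (deriv m) := hmC1.continuous_deriv le_rfl
    -- s = r
    have hsr : ∀ t : ℝ, t * m t = H (x + t • v) - H (x + t • u) := by
      intro t
      have h := hdg (x + t • u) (x + t • v)
      rw [show (x + t • v) - (x + t • u) = t • (v - u) by module] at h
      rw [real_inner_smul_right, real_inner_comm] at h
      simpa [hmdef, hγdef, hF] using h
    -- derivative of r
    set ρ : ℝ → ℝ := fun t => fderiv ℝ H (x + t • v) v - fderiv ℝ H (x + t • u) u with hρdef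
    have hr : ∀ t : ℝ, HasDerivAt (fun s : ℝ => H (x + s • v) - H (x + s • u)) (ρ t) t := by
      intro t
      have h1 : HasDerivAt (fun s : ℝ => x + s • v) v t := by
        simpa using ((hasDerivAt_id t).smul_const v).const_add x
      have h2 : HasDerivAt (fun s : ℝ => x + s • u) u t := by
        simpa using ((hasDerivAt_id t).smul_const u).const_add x
      exact (((hH.differentiable two_ne_zero _).hasFDerivAt.comp_hasDerivAt t h1)).sub
        (((hH.differentiable two_ne_zero _).hasFDerivAt.comp_hasDerivAt t h2))
    have hs : ∀ t : ℝ, HasDerivAt (fun s : ℝ => s * m s) (m t + t * deriv m t) t := by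
      intro t
      have := (hasDerivAt_id' t).mul ((hmC1.differentiable one_ne_zero t).hasDerivAt)
      simp only [one_mul] at this
      exact this
    have heq : ∀ t : ℝ, ρ t = m t + t * deriv m t := by
      intro t
      have h1 := hs t
      rw [funext hsr] at h1
      exact (hr t).unique h1
    -- ρ has derivative S'' v v - S'' u u at 0
    have hρ0 : HasDerivAt ρ (S'' v v - S'' u u) 0 := by
      have h1 : HasDerivAt (fun s : ℝ => x + s • v) v 0 := by
        simpa using ((hasDerivAt_id (0:ℝ)).smul_const v).const_add x
      have h2 : HasDerivAt (fun s : ℝ => x + s • u) u 0 := by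
        simpa using ((hasDerivAt_id (0:ℝ)).smul_const u).const_add x
      have e1 : HasDerivAt (fun s : ℝ => fderiv ℝ H (x + s • v)) (S'' v) 0 := by
        have hx0 : x + (0:ℝ) • v = x := by simp
        have hS3 : HasFDerivAt (fderiv ℝ H) S'' (x + (0:ℝ) • v) := by rw [hx0]; exact hS''
        exact hS3.comp_hasDerivAt 0 h1
      have e2 : HasDerivAt (fun s : ℝ => fderiv ℝ H (x + s • u)) (S'' u) 0 := by
        have hx0 : x + (0:ℝ) • u = x := by simp
        have hS3 : HasFDerivAt (fderiv ℝ H) S'' (x + (0:ℝ) • u) := by rw [hx0]; exact hS''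
        exact hS3.comp_hasDerivAt 0 h2
      have e1' : HasDerivAt (fun s : ℝ => fderiv ℝ H (x + s • v) v) (S'' v v) 0 :=
        (ContinuousLinearMap.apply ℝ ℝ v).hasFDerivAt.comp_hasDerivAt 0 e1
      have e2' : HasDerivAt (fun s : ℝ => fderiv ℝ H (x + s • u) u) (S'' u u) 0 :=
        (ContinuousLinearMap.apply ℝ ℝ u).hasFDerivAt.comp_hasDerivAt 0 e2
      exact e1'.sub e2'
    -- ρ has derivative 2 * deriv m 0 at 0
    have hρ0' : HasDerivAt ρ (deriv m 0 + deriv m 0) 0 := by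
      have ha : HasDerivAt m (deriv m 0) 0 := (hmC1.differentiable one_ne_zero 0).hasDerivAt
      have hb : HasDerivAt (fun t : ℝ => t * deriv m t) (deriv m 0) 0 := by
        rw [hasDerivAt_iff_tendsto_slope]
        have hc : Filter.Tendsto (deriv m) (nhdsWithin 0 {(0:ℝ)}ᶜ) (nhds (deriv m 0)) :=
          (hm'cont.continuousAt).tendsto.mono_left nhdsWithin_le_nhds
        apply hc.congr'
        filter_upwards [self_mem_nhdsWithin] with t ht
        have ht' : t ≠ 0 := ht
        rw [slope_def_field, zero_mul, sub_zero, sub_zero, mul_div_cancel_left₀ _ ht']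
      have := ha.add hb
      have hfun : (fun t : ℝ => m t + t * deriv m t) = ρ := by
        funext t; rw [heq t]
      rw [← hfun]; exact this
    have huniq := hρ0.unique hρ0'
    -- compute deriv m 0
    have h0 : γ 0 = (x, x) := by simp [hγdef]
    have hdm0 : deriv m 0 = ⟪A u + A v, v - u⟫ := by
      rw [hm' 0, h0]
      have : L0 (u, v) = A u + A v := by
        have : ((u : E), (v : E)) = (u, 0) + (0, v) := by simp
        rw [this, map_add, hA u, hA v, hswap u]
      rw [← hL0def, this, real_inner_comm]
    rw [hdm0] at huniq
    linarith [huniq]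
  -- algebra to finish
  have q : ∀ v : E, 2 * ⟪A v, v⟫ = S'' v v := by
    intro v
    have := key 0 v
    simpa using this
  have symmA : ∀ u v : E, ⟪A u, v⟫ = ⟪A v, u⟫ := by
    intro u v
    have k := key u v
    have qu := q u
    have qv := q v
    simp only [inner_add_left, inner_sub_right] at k
    linarith
  have half : ∀ u v : E, ⟪A u, v⟫ = 2⁻¹ * S'' u v := by
    intro u v
    have qq := q (u + v)
    have qu := q u
    have qv := q v
    simp only [map_add, ContinuousLinearMap.add_apply, inner_add_left, inner_add_right] at qq
    have h1 := symmA u v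
    have h2 := S''symm u v
    linarith
  -- relate S'' to fderiv of gradient
  have hgradF : HasFDerivAt (gradient H)
      (((InnerProductSpace.toDual ℝ E).symm.toContinuousLinearEquiv :
        (E →L[ℝ] ℝ) ≃L[ℝ] E).toContinuousLinearMap.comp S'') x := by
    have := (((InnerProductSpace.toDual ℝ E).symm.toContinuousLinearEquiv :
        (E →L[ℝ] ℝ) ≃L[ℝ] E).toContinuousLinearMap).hasFDerivAt.comp x hS''
    convert this using 1
    funext y; rfl
  have hSgrad : fderiv ℝ (gradient H) x
      = (((InnerProductSpace.toDual ℝ E).symm.toContinuousLinearEquiv :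
        (E →L[ℝ] ℝ) ≃L[ℝ] E).toContinuousLinearMap).comp S'' := hgradF.fderiv
  refine ContinuousLinearMap.ext fun u => ?_
  apply ext_inner_right ℝ
  intro v
  rw [hSgrad]
  simp only [ContinuousLinearMap.smul_apply, ContinuousLinearMap.coe_comp', Function.comp_apply,
    real_inner_smul_left]
  rw [half u v]
  congr 1
  simp [InnerProductSpace.toDual_symm_apply]

/-- **Lemma 1.** If a continuously differentiable discrete gradient of a C²
function `H` is symmetric, `∇̄H(x,y) = ∇̄H(y,x)`, then `D₂∇̄H(x,x) = ½ ∇²H(x)`. -/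
theorem symmetric_discrete_gradient_jacobian_eq_half_hessian
    (d : ℕ) (H : EuclideanSpace ℝ (Fin d) → ℝ) (hH : ContDiff ℝ 2 H)
    (dg : EuclideanSpace ℝ (Fin d) → EuclideanSpace ℝ (Fin d) → EuclideanSpace ℝ (Fin d))
    (hdgC1 : ContDiff ℝ 1 (fun p : EuclideanSpace ℝ (Fin d) × EuclideanSpace ℝ (Fin d) =>
      dg p.1 p.2))
    (hdg : ∀ x y, ⟪dg x y, y - x⟫ = H y - H x)
    (hsymm : ∀ x y, dg x y = dg y x) :
    ∀ x : EuclideanSpace ℝ (Fin d),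
      fderiv ℝ (dg x) x = (2 : ℝ)⁻¹ • fderiv ℝ (gradient H) x := by
  intro x
  exact dg_aux H hH dg hdgC1 hdg hsymm x
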